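/- Let κ > 1 and c, c_z > 0 with (3-2κ)c + c_z < 0 and c + (3-2κ)c_z < 0. Define σ* = c(c + (3-2κ)c_z)/((3-2κ)c + c_z). Then the function f(σ) = 1 + [((c+c_z)/(κ-1) - 2c)σ + c c_z - c^2]/(c+σ)^2, evaluated at σ = σ*, equals (-(c+c_z)^2 + 4(κ-1)^2 c c_z) / (4(κ-2)(κ-1)(c+c_z)·c). -/

import Mathlib

/-- In region II, the per-coordinate error
`f(σ) = 1 + [((c+c_z)/(κ-1) - 2c)σ + c c_z - c²]/(c+σ)²`
evaluated at `σ* = c(c + (3-2κ)c_z)/((3-2κ)c + c_z)` equals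
`(-(c+c_z)² + 4(κ-1)² c c_z)/(4(κ-2)(κ-1)(c+c_z)·c)`. -/
theorem region_II_optimal_value
    (κ c cz : ℝ) (hκ : 1 < κ) (hc : 0 < c) (hcz : 0 < cz)
    (h1 : (3 - 2 * κ) * c + cz < 0) (h2 : c + (3 - 2 * κ) * cz < 0) :
    (1 + (((c + cz) / (κ - 1) - 2 * c)
        * (c * (c + (3 - 2 * κ) * cz) / ((3 - 2 * κ) * c + cz))
        + c * cz - c ^ 2)
      / (c + c * (c + (3 - 2 * κ) * cz) / ((3 - 2 * κ) * c + cz)) ^ 2)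
    = (-(c + cz) ^ 2 + 4 * (κ - 1) ^ 2 * c * cz)
        / (4 * (κ - 2) * (κ - 1) * (c + cz) * c) := by
  have hk1 : κ - 1 ≠ 0 := by linarith
  have hD : (3 - 2 * κ) * c + cz ≠ 0 := ne_of_lt h1
  have hk2 : κ - 2 ≠ 0 := by nlinarith
  have hccz : c + cz ≠ 0 := by positivity
  have hc' : c ≠ 0 := ne_of_gt hc
  have hsum : c + c * (c + (3 - 2 * κ) * cz) / ((3 - 2 * κ) * c + cz)
      = c * (4 - 2 * κ) * (c + cz) / ((3 - 2 * κ) * c + cz) := by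
    rw [eq_div_iff hD, add_mul, div_mul_cancel₀ _ hD]; ring
  rw [hsum]
  have h42 : c * (4 - 2 * κ) * (c + cz) ≠ 0 := by
    have : (4 : ℝ) - 2 * κ ≠ 0 := by
      intro h; apply hk2; linarith
    positivity
  have h4 : (4 : ℝ) - 2 * κ ≠ 0 := by
    intro h; apply hk2; linarith
  set D := (3 - 2 * κ) * c + cz with hDdef
  set E := (4 : ℝ) - 2 * κ with hEdef
  field_simp
  rw [hDdef, hEdef]
  ring
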